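/- Let (T, d) be a metric space. T is an ℝ-tree if and only if T is connected and satisfies the four-point inequality: for all σ₁, σ₂, σ₃, σ₄ ∈ T, d(σ₁,σ₂) + d(σ₃,σ₄) ≤ max( d(σ₁,σ₃) + d(σ₂,σ₄), d(σ₁,σ₄) + d(σ₂,σ₃) ). -/

import Mathlib

open Set

/-- A geodesic parametrization of the arc from `x` to `y`:
an isometric embedding of `[0, dist x y]` with the right endpoints. -/
def IsGeodesicArc {T : Type*} [MetricSpace T] (x y : T) (f : ℝ → T) : Prop :=
  (∀ s t : ℝ, s ∈ Set.Icc 0 (dist x y) → t ∈ Set.Icc 0 (dist x y) →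
    dist (f s) (f t) = |s - t|) ∧ f 0 = x ∧ f (dist x y) = y

/-- `(T,d)` is an ℝ-tree: (a) any two points are joined by a unique geodesic arc, and
(b) every continuous injective path between two points has the geodesic arc as image. -/
def IsRTree (T : Type*) [MetricSpace T] : Prop :=
  ∀ x y : T,
    (∃ f : ℝ → T, IsGeodesicArc x y f) ∧
    (∀ f g : ℝ → T, IsGeodesicArc x y f → IsGeodesicArc x y g →
      Set.EqOn f g (Set.Icc 0 (dist x y))) ∧
    (∀ j : ℝ → T, ContinuousOn j (Set.Icc 0 1) → Set.InjOn j (Set.Icc 0 1) →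
      j 0 = x → j 1 = y →
      ∀ f : ℝ → T, IsGeodesicArc x y f →
        j '' Set.Icc 0 1 = f '' Set.Icc 0 (dist x y))

namespace RTreeAux
variable {T : Type*} [MetricSpace T]

/-- Four point condition -/
def FourPt (T : Type*) [MetricSpace T] : Prop :=
  ∀ σ₁ σ₂ σ₃ σ₄ : T,
    dist σ₁ σ₂ + dist σ₃ σ₄ ≤ max (dist σ₁ σ₃ + dist σ₂ σ₄) (dist σ₁ σ₄ + dist σ₂ σ₃)

/-- Gromov product based coordinate along the (virtual) segment [x,y]. -/
noncomputable def gA (x y w : T) : ℝ := (dist x w + dist x y - dist y w) / 2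
/-- distance to the (virtual) segment [x,y]. -/
noncomputable def gH (x y w : T) : ℝ := (dist x w + dist y w - dist x y) / 2

lemma gA_x (x y : T) : gA x y x = 0 := by simp [gA, dist_comm]
lemma gA_y (x y : T) : gA x y y = dist x y := by simp [gA, dist_comm]
lemma gH_x (x y : T) : gH x y x = 0 := by simp [gH, dist_comm]
lemma gH_y (x y : T) : gH x y y = 0 := by simp [gH, dist_comm]

lemma gH_nonneg (x y w : T) : 0 ≤ gH x y w := by
  have := dist_triangle x w y
  simp only [gH]; rw [dist_comm w y] at this; linarith

lemma gA_nonneg (x y w : T) : 0 ≤ gA x y w := by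
  have := dist_triangle y x w
  simp only [gA]; rw [dist_comm y x] at this; linarith

lemma gA_le (x y w : T) : gA x y w ≤ dist x y := by
  simp only [gA]; linarith [dist_triangle x y w]

lemma dist_x_eq (x y w : T) : dist x w = gA x y w + gH x y w := by simp [gA, gH]; ring
lemma dist_y_eq (x y w : T) : dist y w = (dist x y - gA x y w) + gH x y w := by
  simp [gA, gH]; ring

lemma gA_lipschitz (x y w v : T) : |gA x y w - gA x y v| ≤ dist w v := by
  rw [abs_sub_le_iff]
  constructor <;> simp only [gA] <;>
    linarith [dist_triangle x w v, dist_triangle x v w, dist_triangle y v w,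
      dist_triangle y w v, dist_comm w v, dist_comm x w, dist_comm x v,
      dist_comm y w, dist_comm y v]

lemma gH_lipschitz (x y w v : T) : |gH x y w - gH x y v| ≤ dist w v := by
  rw [abs_sub_le_iff]
  constructor <;> simp only [gH] <;>
    linarith [dist_triangle x w v, dist_triangle x v w, dist_triangle y v w,
      dist_triangle y w v, dist_comm w v, dist_comm x w, dist_comm x v,
      dist_comm y w, dist_comm y v]

/-- Key separation estimate from the four-point condition. -/
lemma sep_est (H : FourPt T) {x y w v : T} (hlt : gA x y w < gA x y v) :
    (gA x y v - gA x y w) + gH x y w + gH x y v ≤ dist w v := by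
  have h := H w y x v
  have hwx : dist w x = gA x y w + gH x y w := by rw [dist_comm]; exact dist_x_eq x y w
  have hwy : dist w y = (dist x y - gA x y w) + gH x y w := by
    rw [dist_comm]; exact dist_y_eq x y w
  have hxv : dist x v = gA x y v + gH x y v := dist_x_eq x y v
  have hyv : dist y v = (dist x y - gA x y v) + gH x y v := dist_y_eq x y v
  rcases le_max_iff.mp h with h1 | h1
  · rw [hwx, hwy, hxv, hyv] at h1; linarith
  · rw [hwy, hxv] at h1; rw [dist_comm y x] at h1; linarith

/-- Two points on the segment are at distance `|Δ parameter|`. -/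
lemma dist_on_seg (H : FourPt T) {x y w v : T} (hw : gH x y w = 0) (hv : gH x y v = 0) :
    dist w v = |gA x y w - gA x y v| := by
  have hge := gA_lipschitz x y w v
  have h := H w v x y
  have hwx : dist w x = gA x y w := by rw [dist_comm, dist_x_eq x y w, hw]; ring
  have hwy : dist w y = dist x y - gA x y w := by rw [dist_comm, dist_y_eq x y w, hw]; ring
  have hvx : dist v x = gA x y v := by rw [dist_comm, dist_x_eq x y v, hv]; ring
  have hvy : dist v y = dist x y - gA x y v := by rw [dist_comm, dist_y_eq x y v, hv]; ring
  have hle : dist w v ≤ |gA x y w - gA x y v| := by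
    rcases le_max_iff.mp h with h1 | h1
    · rw [hwx, hvy] at h1
      rcases abs_cases (gA x y w - gA x y v) with ⟨he, _⟩ | ⟨he, _⟩ <;> rw [he] <;> linarith
    · rw [hwy, hvx] at h1
      rcases abs_cases (gA x y w - gA x y v) with ⟨he, _⟩ | ⟨he, _⟩ <;> rw [he] <;> linarith
  linarith

/-! ### Separation sets -/

lemma U_open (x y : T) (t : ℝ) : IsOpen {w : T | gA x y w < t} := by
  rw [Metric.isOpen_iff]
  intro w hw
  refine ⟨t - gA x y w, by simpa using hw, fun v hv => ?_⟩
  have h := gA_lipschitz x y w v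
  rw [Metric.mem_ball, dist_comm] at hv
  have := abs_lt.mp (lt_of_le_of_lt h hv)
  simp only [mem_setOf_eq]; linarith [this.1]

lemma V_open (H : FourPt T) (x y : T) (t : ℝ) :
    IsOpen {w : T | t < gA x y w ∨ (gA x y w = t ∧ 0 < gH x y w)} := by
  rw [Metric.isOpen_iff]
  intro w hw
  rcases hw with h | ⟨ha, hh⟩
  · refine ⟨gA x y w - t, by linarith, fun v hv => ?_⟩
    have hl := gA_lipschitz x y w v
    rw [Metric.mem_ball, dist_comm] at hv
    have := abs_lt.mp (lt_of_le_of_lt hl hv)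
    exact Or.inl (by linarith [this.2])
  · refine ⟨gH x y w, hh, fun v hv => ?_⟩
    rw [Metric.mem_ball, dist_comm] at hv
    rcases lt_trichotomy (gA x y v) t with hlt | heq | hgt
    · exfalso
      have := sep_est H (x := x) (y := y) (w := v) (v := w) (by rw [ha]; exact hlt)
      rw [dist_comm] at this
      linarith [gH_nonneg x y v]
    · refine Or.inr ⟨heq, ?_⟩
      have := abs_lt.mp (lt_of_le_of_lt (gH_lipschitz x y w v) hv)
      linarith [this.2]
    · exact Or.inl hgt

lemma UV_cover {x y : T} {t : ℝ} {w : T} (hw : ¬(gH x y w = 0 ∧ gA x y w = t)) :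
    w ∈ {w : T | gA x y w < t} ∪ {w : T | t < gA x y w ∨ (gA x y w = t ∧ 0 < gH x y w)} := by
  rcases lt_trichotomy (gA x y w) t with h | h | h
  · exact Or.inl h
  · right; right
    refine ⟨h, ?_⟩
    rcases lt_or_eq_of_le (gH_nonneg x y w) with hh | hh
    · exact hh
    · exact absurd ⟨hh.symm, h⟩ hw
  · exact Or.inr (Or.inl h)

/-- On a preconnected subset containing x and y and avoiding all between-points at
parameter t, contradiction. -/
lemma exists_between_of_preconnected (H : FourPt T) {x y : T} {P : Set T}
    (hP : IsPreconnected P) (hx : x ∈ P) (hy : y ∈ P) {t : ℝ}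
    (ht0 : 0 < t) (htD : t < dist x y)
    (hno : ∀ w ∈ P, ¬(gH x y w = 0 ∧ gA x y w = t)) : False := by
  set U := {w : T | gA x y w < t} with hU
  set V := {w : T | t < gA x y w ∨ (gA x y w = t ∧ 0 < gH x y w)} with hV
  have hcov : P ⊆ U ∪ V := fun w hw => UV_cover (hno w hw)
  have hxU : x ∈ P ∩ U := ⟨hx, by simp [hU, gA_x]; exact ht0⟩
  have hyV : y ∈ P ∩ V := ⟨hy, Or.inl (by rw [gA_y]; exact htD)⟩
  obtain ⟨w, _, hwU, hwV⟩ := hP U V (U_open x y t) (V_open H x y t) hcov ⟨x, hxU⟩ ⟨y, hyV⟩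
  rcases hwV with h | ⟨h, _⟩
  · exact absurd hwU (by simp [hU]; linarith)
  · exact absurd hwU (by simp [hU, h])

/-- Existence of between points in a connected space satisfying four-point. -/
lemma exists_between (H : FourPt T) [PreconnectedSpace T] (x y : T) {t : ℝ}
    (ht : t ∈ Icc 0 (dist x y)) : ∃ z : T, gH x y z = 0 ∧ gA x y z = t := by
  rcases eq_or_lt_of_le ht.1 with h0 | h0
  · exact ⟨x, gH_x x y, by rw [gA_x]; exact h0⟩
  rcases eq_or_lt_of_le ht.2 with hD | hD
  · exact ⟨y, gH_y x y, by rw [gA_y, hD]⟩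
  by_contra hc
  push_neg at hc
  exact exists_between_of_preconnected H isPreconnected_univ (mem_univ x) (mem_univ y)
    h0 hD (fun w _ => fun ⟨h1, h2⟩ => hc w h1 h2)

/-! ### Basic properties of geodesic arcs -/

lemma geo_dist_left {x y : T} {f : ℝ → T} (hf : IsGeodesicArc x y f) {s : ℝ}
    (hs : s ∈ Icc 0 (dist x y)) : dist x (f s) = s := by
  have h0 : (0 : ℝ) ∈ Icc 0 (dist x y) := ⟨le_refl _, dist_nonneg⟩
  have := hf.1 0 s h0 hs
  rw [hf.2.1] at this
  rw [this, abs_of_nonpos (by linarith [hs.1])]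
  linarith

lemma geo_dist_right {x y : T} {f : ℝ → T} (hf : IsGeodesicArc x y f) {s : ℝ}
    (hs : s ∈ Icc 0 (dist x y)) : dist y (f s) = dist x y - s := by
  have hD : dist x y ∈ Icc 0 (dist x y) := ⟨dist_nonneg, le_refl _⟩
  have := hf.1 (dist x y) s hD hs
  rw [hf.2.2] at this
  rw [this, abs_of_nonneg (by linarith [hs.2])]

lemma geo_gH {x y : T} {f : ℝ → T} (hf : IsGeodesicArc x y f) {s : ℝ}
    (hs : s ∈ Icc 0 (dist x y)) : gH x y (f s) = 0 := by
  simp only [gH, geo_dist_left hf hs, geo_dist_right hf hs]; ring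

lemma geo_gA {x y : T} {f : ℝ → T} (hf : IsGeodesicArc x y f) {s : ℝ}
    (hs : s ∈ Icc 0 (dist x y)) : gA x y (f s) = s := by
  simp only [gA, geo_dist_left hf hs, geo_dist_right hf hs]; ring

lemma geo_continuousOn {x y : T} {f : ℝ → T} (hf : IsGeodesicArc x y f) :
    ContinuousOn f (Icc 0 (dist x y)) := by
  have : LipschitzOnWith 1 f (Icc 0 (dist x y)) := by
    rw [lipschitzOnWith_iff_dist_le_mul]
    intro s hs t ht
    rw [hf.1 s t hs ht]
    simp [Real.dist_eq]
  exact this.continuousOn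

/-- Uniqueness of geodesic arcs under four-point. -/
lemma geo_unique (H : FourPt T) {x y : T} {f g : ℝ → T} (hf : IsGeodesicArc x y f)
    (hg : IsGeodesicArc x y g) : Set.EqOn f g (Icc 0 (dist x y)) := by
  intro s hs
  have := dist_on_seg H (geo_gH hf hs) (geo_gH hg hs)
  rw [geo_gA hf hs, geo_gA hg hs, sub_self, abs_zero] at this
  exact dist_le_zero.mp this.le

/-- PART 1: the geodesic arc image is contained in any injective path's image. -/
lemma seg_subset_path (H : FourPt T) {x y : T} {f j : ℝ → T}
    (hf : IsGeodesicArc x y f) (hjc : ContinuousOn j (Icc 0 1)) (hji : InjOn j (Icc 0 1))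
    (hj0 : j 0 = x) (hj1 : j 1 = y) :
    f '' Icc 0 (dist x y) ⊆ j '' Icc 0 1 := by
  rintro _ ⟨t, ht, rfl⟩
  rcases eq_or_lt_of_le ht.1 with h0 | h0
  · refine ⟨0, ⟨le_refl _, zero_le_one⟩, ?_⟩
    rw [hj0, ← h0, hf.2.1]
  rcases eq_or_lt_of_le ht.2 with hD | hD
  · refine ⟨1, ⟨zero_le_one, le_refl _⟩, ?_⟩
    rw [hj1, hD, hf.2.2]
  by_contra hc
  have hP : IsPreconnected (j '' Icc 0 1) := (isPreconnected_Icc).image j hjc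
  refine exists_between_of_preconnected H hP ⟨0, ⟨le_refl _, zero_le_one⟩, hj0⟩
    ⟨1, ⟨zero_le_one, le_refl _⟩, hj1⟩ h0 hD (fun w hw => fun ⟨h1, h2⟩ => hc ?_)
  have : w = f t := by
    have hd := dist_on_seg H h1 (geo_gH hf ht)
    rw [h2, geo_gA hf ht, sub_self, abs_zero] at hd
    exact dist_le_zero.mp hd.le
  rw [← this]; exact hw


/-! ### Existence of geodesics -/

lemma exists_geodesic (H : FourPt T) [PreconnectedSpace T] (x y : T) :
    ∃ f : ℝ → T, IsGeodesicArc x y f := by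
  classical
  refine ⟨fun t => if ht : t ∈ Icc 0 (dist x y) then (exists_between H x y ht).choose else x, ?_, ?_, ?_⟩
  · intro s t hs ht
    simp only [dif_pos hs, dif_pos ht]
    obtain ⟨hH1, hA1⟩ := (exists_between H x y hs).choose_spec
    obtain ⟨hH2, hA2⟩ := (exists_between H x y ht).choose_spec
    rw [dist_on_seg H hH1 hH2, hA1, hA2]
  · have h0 : (0:ℝ) ∈ Icc 0 (dist x y) := ⟨le_refl _, dist_nonneg⟩
    simp only [dif_pos h0]
    obtain ⟨hH1, hA1⟩ := (exists_between H x y h0).choose_spec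
    have := dist_on_seg H hH1 (gH_x x y)
    rw [hA1, gA_x, sub_self, abs_zero] at this
    exact dist_le_zero.mp this.le
  · have hD : dist x y ∈ Icc 0 (dist x y) := ⟨dist_nonneg, le_refl _⟩
    simp only [dif_pos hD]
    obtain ⟨hH1, hA1⟩ := (exists_between H x y hD).choose_spec
    have := dist_on_seg H hH1 (gH_y x y)
    rw [hA1, gA_y, sub_self, abs_zero] at this
    exact dist_le_zero.mp this.le

/-- Restriction of a geodesic arc between two of its points. -/
lemma sub_geodesic {x y : T} {f : ℝ → T} (hf : IsGeodesicArc x y f) {s₁ s₂ : ℝ}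
    (h1 : s₁ ∈ Icc 0 (dist x y)) (h2 : s₂ ∈ Icc 0 (dist x y)) :
    ∃ g : ℝ → T, IsGeodesicArc (f s₁) (f s₂) g ∧
      ∀ r ∈ Icc 0 (dist (f s₁) (f s₂)), g r ∈ f '' Icc 0 (dist x y) := by
  have hd : dist (f s₁) (f s₂) = |s₁ - s₂| := hf.1 s₁ s₂ h1 h2
  rcases le_total s₁ s₂ with hle | hle
  · have hd' : dist (f s₁) (f s₂) = s₂ - s₁ := by rw [hd, abs_of_nonpos (by linarith)]; ring
    refine ⟨fun r => f (s₁ + r), ⟨?_, ?_, ?_⟩, ?_⟩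
    · intro r r' hr hr'
      rw [hd'] at hr hr'
      rw [hf.1 (s₁ + r) (s₁ + r') ⟨by linarith [hr.1, h1.1], by linarith [hr.2, h2.2]⟩
        ⟨by linarith [hr'.1, h1.1], by linarith [hr'.2, h2.2]⟩]
      ring_nf
    · simp
    · rw [hd']; ring_nf
    · intro r hr
      rw [hd'] at hr
      exact ⟨s₁ + r, ⟨by linarith [hr.1, h1.1], by linarith [hr.2, h2.2]⟩, rfl⟩
  · have hd' : dist (f s₁) (f s₂) = s₁ - s₂ := by rw [hd, abs_of_nonneg (by linarith)]
    refine ⟨fun r => f (s₁ - r), ⟨?_, ?_, ?_⟩, ?_⟩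
    · intro r r' hr hr'
      rw [hd'] at hr hr'
      rw [hf.1 (s₁ - r) (s₁ - r') ⟨by linarith [hr.2, h2.1], by linarith [hr.1, h1.2]⟩
        ⟨by linarith [hr'.2, h2.1], by linarith [hr'.1, h1.2]⟩]
      rw [show s₁ - r - (s₁ - r') = -(r - r') by ring, abs_neg]
    · simp
    · rw [hd']; ring_nf
    · intro r hr
      rw [hd'] at hr
      exact ⟨s₁ - r, ⟨by linarith [hr.2, h2.1], by linarith [hr.1, h1.2]⟩, rfl⟩

/-- PART 2: any injective path's image is contained in the geodesic arc image. -/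
lemma path_subset_seg (H : FourPt T) {x y : T} {f j : ℝ → T}
    (hf : IsGeodesicArc x y f) (hjc : ContinuousOn j (Icc 0 1)) (hji : InjOn j (Icc 0 1))
    (hj0 : j 0 = x) (hj1 : j 1 = y) :
    j '' Icc 0 1 ⊆ f '' Icc 0 (dist x y) := by
  set D := dist x y with hD
  set S := f '' Icc 0 D with hS
  have hScl : IsClosed S := (isCompact_Icc.image_of_continuousOn (geo_continuousOn hf)).isClosed
  set K := Icc (0:ℝ) 1 ∩ j ⁻¹' S with hK
  have hKcl : IsClosed K := hjc.preimage_isClosed_of_isClosed isClosed_Icc hScl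
  have h0K : (0:ℝ) ∈ K :=
    ⟨⟨le_refl _, zero_le_one⟩, by simp only [mem_preimage, hj0, hS]; exact ⟨0, ⟨le_refl _, dist_nonneg⟩, hf.2.1⟩⟩
  have h1K : (1:ℝ) ∈ K :=
    ⟨⟨zero_le_one, le_refl _⟩, by simp only [mem_preimage, hj1, hS]; exact ⟨D, ⟨dist_nonneg, le_refl _⟩, hf.2.2⟩⟩
  rintro _ ⟨u, hu, rfl⟩
  by_contra hc
  have huK : u ∉ K := fun h => hc h.2
  -- the sup below u and inf above u of K
  set K₁ := K ∩ Icc 0 u with hK₁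
  set K₂ := K ∩ Icc u 1 with hK₂
  have hK₁ne : K₁.Nonempty := ⟨0, h0K, le_refl _, hu.1⟩
  have hK₂ne : K₂.Nonempty := ⟨1, h1K, hu.2, le_refl _⟩
  have hK₁bdd : BddAbove K₁ := (bddAbove_Icc (a := (0:ℝ)) (b := u)).mono (inter_subset_right)
  have hK₂bdd : BddBelow K₂ := (bddBelow_Icc : BddBelow (Icc u (1:ℝ))).mono (inter_subset_right)
  have hK₁cl : IsClosed K₁ := hKcl.inter isClosed_Icc
  have hK₂cl : IsClosed K₂ := hKcl.inter isClosed_Icc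
  set u₁ := sSup K₁ with hu₁
  set u₂ := sInf K₂ with hu₂
  have hu₁mem : u₁ ∈ K₁ := hK₁cl.csSup_mem hK₁ne hK₁bdd
  have hu₂mem : u₂ ∈ K₂ := hK₂cl.csInf_mem hK₂ne hK₂bdd
  have hu₁lt : u₁ < u := lt_of_le_of_ne hu₁mem.2.2 (fun h => huK (h ▸ hu₁mem.1))
  have hu₂gt : u < u₂ := lt_of_le_of_ne hu₂mem.2.1 (fun h => huK (by rw [h]; exact hu₂mem.1))
  have hnoK : ∀ k ∈ K, k ≤ u₁ ∨ u₂ ≤ k := by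
    intro k hk
    rcases le_total k u with h | h
    · exact Or.inl (le_csSup hK₁bdd ⟨hk, hk.1.1, h⟩)
    · exact Or.inr (csInf_le hK₂bdd ⟨hk, h, hk.1.2⟩)
  obtain ⟨s₁, hs₁, hfs₁⟩ := hu₁mem.1.2
  obtain ⟨s₂, hs₂, hfs₂⟩ := hu₂mem.1.2
  have hs₁₂ : s₁ ≠ s₂ := by
    intro h
    exact absurd (hji hu₁mem.1.1 hu₂mem.1.1 (by rw [← hfs₁, ← hfs₂, h]))
      (ne_of_lt (hu₁lt.trans hu₂gt))
  obtain ⟨g, hg, hgS⟩ := sub_geodesic hf hs₁ hs₂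
  set dpq := dist (f s₁) (f s₂) with hdpq
  have hpq : 0 < dpq := by
    rw [hdpq, hf.1 s₁ s₂ hs₁ hs₂]
    exact abs_pos.mpr (sub_ne_zero.mpr hs₁₂)
  have hu₁Icc : u₁ ∈ Icc (0:ℝ) 1 := hu₁mem.1.1
  have hu₂Icc : u₂ ∈ Icc (0:ℝ) 1 := hu₂mem.1.1
  have hd12 : (0:ℝ) < u₂ - u₁ := by linarith
  set jj := fun r : ℝ => j (u₁ + r * (u₂ - u₁)) with hjj
  have hmaps : ∀ r ∈ Icc (0:ℝ) 1, u₁ + r * (u₂ - u₁) ∈ Icc (0:ℝ) 1 := by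
    intro r hr
    constructor
    · nlinarith [hr.1, hu₁Icc.1]
    · nlinarith [hr.2, hu₂Icc.2]
  have hphi : Continuous (fun r : ℝ => u₁ + r * (u₂ - u₁)) :=
    continuous_const.add (continuous_id.mul continuous_const)
  have hjjc : ContinuousOn jj (Icc 0 1) :=
    ContinuousOn.comp hjc hphi.continuousOn (fun r hr => hmaps r hr)
  have hjji : InjOn jj (Icc 0 1) := by
    intro r hr r' hr' h
    have := hji (hmaps r hr) (hmaps r' hr') h
    have h2 : r * (u₂ - u₁) = r' * (u₂ - u₁) := by linarith
    exact mul_right_cancel₀ (ne_of_gt hd12) h2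
  have hjj0 : jj 0 = f s₁ := by
    simp only [hjj, zero_mul, add_zero]; exact hfs₁.symm
  have hjj1 : jj 1 = f s₂ := by
    simp only [hjj, one_mul]
    rw [show u₁ + (u₂ - u₁) = u₂ by ring]; exact hfs₂.symm
  have hmid : g (dpq / 2) ∈ jj '' Icc 0 1 := by
    apply seg_subset_path H hg hjjc hjji hjj0 hjj1
    exact ⟨dpq / 2, ⟨by linarith, by linarith⟩, rfl⟩
  obtain ⟨r₀, hr₀, hr₀eq⟩ := hmid
  set u' := u₁ + r₀ * (u₂ - u₁) with hu'
  have hu'K : u' ∈ K := by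
    refine ⟨hmaps r₀ hr₀, ?_⟩
    simp only [mem_preimage]
    show j u' ∈ S
    rw [show j u' = g (dpq / 2) from hr₀eq]
    exact hgS _ ⟨by linarith, by linarith⟩
  have hu'mem : u₁ ≤ u' ∧ u' ≤ u₂ := by
    constructor
    · nlinarith [hr₀.1]
    · nlinarith [hr₀.2]
  have hmidd : ∀ r ∈ Icc 0 dpq, dist (g (dpq/2)) (g r) = |dpq/2 - r| := fun r hr =>
    hg.1 _ r ⟨by linarith, by linarith⟩ hr
  rcases hnoK u' hu'K with h | h
  · have heq : u' = u₁ := le_antisymm h hu'mem.1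
    have he : g (dpq / 2) = f s₁ := by
      rw [← hr₀eq]
      show j (u₁ + r₀ * (u₂ - u₁)) = f s₁
      rw [show u₁ + r₀ * (u₂ - u₁) = u₁ from heq]
      exact hfs₁.symm
    have hd := hmidd 0 ⟨le_refl _, hpq.le⟩
    rw [hg.2.1, he, dist_self, sub_zero, abs_of_pos (half_pos hpq)] at hd
    linarith
  · have heq : u' = u₂ := le_antisymm hu'mem.2 h
    have he : g (dpq / 2) = f s₂ := by
      rw [← hr₀eq]
      show j (u₁ + r₀ * (u₂ - u₁)) = f s₂
      rw [show u₁ + r₀ * (u₂ - u₁) = u₂ from heq]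
      exact hfs₂.symm
    have hd := hmidd dpq ⟨hpq.le, le_refl _⟩
    rw [hg.2.2, he, dist_self, show dpq / 2 - dpq = -(dpq/2) by ring, abs_neg,
      abs_of_pos (half_pos hpq)] at hd
    linarith


/-! ### Forward direction -/


/-- Concatenating the reversed tail of `f` with the tail of `g` computes `dist y z`. -/
lemma concat_dist (ht : IsRTree T) {x y z : T} {f g : ℝ → T}
    (hf : IsGeodesicArc x y f) (hg : IsGeodesicArc x z g) {c : ℝ}
    (hcy : c ∈ Icc 0 (dist x y)) (hcz : c ∈ Icc 0 (dist x z)) (hfg : f c = g c)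
    (hmax : ∀ s, s ∈ Icc 0 (min (dist x y) (dist x z)) → f s = g s → s ≤ c) :
    dist y z = (dist x y - c) + (dist x z - c) := by
  classical
  set dxy := dist x y with hdxy
  set dxz := dist x z with hdxz
  set β := dxy - c with hβ
  set γ := dxz - c with hγ
  have hβ0 : 0 ≤ β := by simp only [hβ]; linarith [hcy.2]
  have hγ0 : 0 ≤ γ := by simp only [hγ]; linarith [hcz.2]
  have hdfz : dist (f c) z = γ := by rw [hfg, dist_comm]; exact (geo_dist_right hg hcz)
  have hdyf : dist y (f c) = β := geo_dist_right hf hcy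
  rcases eq_or_lt_of_le (by linarith : (0:ℝ) ≤ β + γ) with hL0 | hL0
  · have h1 : dist y z ≤ β + γ := by
      calc dist y z ≤ dist y (f c) + dist (f c) z := dist_triangle _ _ _
      _ = β + γ := by rw [hdyf, hdfz]
    have := dist_nonneg (x := y) (y := z)
    linarith
  set L := β + γ with hL
  -- the concatenated path
  set φ₁ := fun u : ℝ => min dxy (max c (dxy - u * L)) with hφ₁
  set φ₂ := fun u : ℝ => min dxz (max c (c + u * L - β)) with hφ₂
  set j := fun u : ℝ => if c ≤ dxy - u * L then (f ∘ φ₁) u else (g ∘ φ₂) u with hj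
  have hφ₁mem : ∀ u, φ₁ u ∈ Icc 0 dxy := by
    intro u
    exact ⟨le_min (by linarith [hcy.1, hcy.2]) (le_max_of_le_left hcy.1), min_le_left _ _⟩
  have hφ₂mem : ∀ u, φ₂ u ∈ Icc 0 dxz := by
    intro u
    exact ⟨le_min (by linarith [hcz.1, hcz.2]) (le_max_of_le_left hcz.1), min_le_left _ _⟩
  have hφ₁val : ∀ u, 0 ≤ u → c ≤ dxy - u * L → φ₁ u = dxy - u * L := by
    intro u hu hcu
    simp only [hφ₁]
    rw [max_eq_right hcu, min_eq_right (by nlinarith)]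
  have hφ₂val : ∀ u, u * L ≤ L → φ₂ u = max c (c + u * L - β) := by
    intro u hu
    simp only [hφ₂]
    rw [min_eq_right]
    exact max_le (by linarith [hcz.2]) (by linarith)
  have hjc : Continuous j := by
    apply Continuous.if_le
    · exact (geo_continuousOn hf).comp_continuous
        (continuous_const.min (continuous_const.max
          (continuous_const.sub (continuous_id.mul continuous_const)))) hφ₁mem
    · exact (geo_continuousOn hg).comp_continuous
        (continuous_const.min (continuous_const.max
          ((continuous_const.add (continuous_id.mul continuous_const)).sub continuous_const))) hφ₂mem
    · exact continuous_const
    · exact continuous_const.sub (continuous_id.mul continuous_const)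
    · intro u hu
      have h1 : φ₁ u = c := by
        simp only [hφ₁, ← hu, max_self, min_eq_right hcy.2]
      have h2 : φ₂ u = c := by
        have : u * L = β := by simp only [hβ] at *; linarith
        simp only [hφ₂, this]
        rw [show c + β - β = c by ring, max_self, min_eq_right hcz.2]
      simp only [Function.comp_apply, h1, h2, hfg]
  have hj0 : j 0 = y := by
    have hb : c ≤ dxy - 0 * L := by simpa using hcy.2
    simp only [hj, if_pos hb, Function.comp_apply]
    rw [hφ₁val 0 (le_refl 0) hb]
    simpa using hf.2.2
  have hj1 : j 1 = z := by
    rcases eq_or_lt_of_le hγ0 with hγ0' | hγ0'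
    · have hb : c ≤ dxy - 1 * L := by
        simp only [hL, hβ, ← hγ0']; ring_nf; linarith [hcy.2]
      simp only [hj, if_pos hb, Function.comp_apply]
      have : dxy - 1 * L = c := by simp only [hL, hβ, ← hγ0']; ring
      rw [hφ₁val 1 zero_le_one hb, this, hfg]
      have : dist (g c) z = 0 := by rw [← hfg, hdfz, ← hγ0']
      exact (dist_le_zero.mp this.le)
    · have hb : ¬ c ≤ dxy - 1 * L := by
        simp only [hL, hβ]; intro h; nlinarith
      simp only [hj, if_neg hb, Function.comp_apply]
      rw [hφ₂val 1 (by linarith)]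
      have : c + 1 * L - β = dxz := by simp only [hL, hβ, hγ]; ring
      rw [this, max_eq_right hcz.2]
      exact hg.2.2
  -- characterize values of j on [0,1]
  have hjval : ∀ u ∈ Icc (0:ℝ) 1,
      (c ≤ dxy - u * L ∧ j u = f (dxy - u * L)) ∨
      (¬ c ≤ dxy - u * L ∧ j u = g (c + u * L - β) ∧ c < c + u * L - β ∧ c + u * L - β ≤ dxz) := by
    intro u hu
    have huL : u * L ≤ L := by nlinarith [hu.1, hu.2]
    by_cases hb : c ≤ dxy - u * L
    · left
      refine ⟨hb, ?_⟩
      simp only [hj, if_pos hb, Function.comp_apply, hφ₁val u hu.1 hb]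
    · right
      have hgt : β < u * L := by simp only [hβ] at *; linarith [not_le.mp hb]
      refine ⟨hb, ?_, by linarith, by linarith⟩
      simp only [hj, if_neg hb, Function.comp_apply, hφ₂val u huL]
      rw [max_eq_right (by linarith)]
  have hji : InjOn j (Icc 0 1) := by
    intro u hu v hv huv
    rcases hjval u hu with ⟨hbu, hju⟩ | ⟨hbu, hju, hcu, hdu⟩ <;>
      rcases hjval v hv with ⟨hbv, hjv⟩ | ⟨hbv, hjv, hcv, hdv⟩
    · rw [hju, hjv] at huv
      have h1 : (dxy - u * L) ∈ Icc 0 dxy := ⟨by linarith [hcy.1], by nlinarith [hu.1]⟩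
      have h2 : (dxy - v * L) ∈ Icc 0 dxy := ⟨by linarith [hcy.1], by nlinarith [hv.1]⟩
      have := hf.1 _ _ h1 h2
      rw [huv, dist_self] at this
      have := (abs_eq_zero.mp this.symm)
      have : u * L = v * L := by linarith
      exact mul_right_cancel₀ (by positivity) this
    · -- mixed: f s = g t with t > c
      exfalso
      rw [hju, hjv] at huv
      have h1 : (dxy - u * L) ∈ Icc 0 dxy := ⟨by linarith [hcy.1], by nlinarith [hu.1]⟩
      have h2 : (c + v * L - β) ∈ Icc 0 dxz := ⟨by linarith [hcz.1], hdv⟩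
      have he1 : dist x (f (dxy - u * L)) = dxy - u * L := geo_dist_left hf h1
      have he2 : dist x (g (c + v * L - β)) = c + v * L - β := geo_dist_left hg h2
      rw [huv, he2] at he1
      have hs := hmax (c + v * L - β) ⟨by linarith [hcz.1], le_min (by linarith [h1.2]) hdv⟩
        (by conv_lhs => rw [he1]
            exact huv)
      linarith
    · exfalso
      rw [hju, hjv] at huv
      have h1 : (dxy - v * L) ∈ Icc 0 dxy := ⟨by linarith [hcy.1], by nlinarith [hv.1]⟩
      have h2 : (c + u * L - β) ∈ Icc 0 dxz := ⟨by linarith [hcz.1], hdu⟩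
      have he1 : dist x (f (dxy - v * L)) = dxy - v * L := geo_dist_left hf h1
      have he2 : dist x (g (c + u * L - β)) = c + u * L - β := geo_dist_left hg h2
      rw [← huv, he2] at he1
      have hs := hmax (c + u * L - β) ⟨by linarith [hcz.1], le_min (by linarith [h1.2]) hdu⟩
        (by conv_lhs => rw [he1]
            exact huv.symm)
      linarith
    · rw [hju, hjv] at huv
      have h1 : (c + u * L - β) ∈ Icc 0 dxz := ⟨by linarith [hcz.1], hdu⟩
      have h2 : (c + v * L - β) ∈ Icc 0 dxz := ⟨by linarith [hcz.1], hdv⟩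
      have := hg.1 _ _ h1 h2
      rw [huv, dist_self] at this
      have := (abs_eq_zero.mp this.symm)
      have : u * L = v * L := by linarith
      exact mul_right_cancel₀ (by positivity) this
  -- apply the path axiom
  obtain ⟨hgeo, hhgeo⟩ := (ht y z).1
  have him := (ht y z).2.2 j hjc.continuousOn hji hj0 hj1 hgeo hhgeo
  -- the point f c is on the path
  have hustar : (β / L) ∈ Icc (0:ℝ) 1 := ⟨by positivity, by rw [div_le_one hL0]; linarith⟩
  have hjmid : j (β / L) = f c := by
    have harg : β / L * L = β := div_mul_cancel₀ β (ne_of_gt hL0)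
    have hb : c ≤ dxy - β / L * L := by rw [harg]; simp only [hβ]; linarith
    simp only [hj, if_pos hb, Function.comp_apply]
    rw [hφ₁val _ (by positivity) hb, harg, show dxy - β = c by simp only [hβ]; ring]
  have hmem : f c ∈ hgeo '' Icc 0 (dist y z) := by
    rw [← him]
    exact ⟨β / L, hustar, hjmid⟩
  obtain ⟨u₀, hu₀, he₀⟩ := hmem
  have hy0 : dist y (f c) = u₀ := by rw [← he₀]; exact (geo_dist_left hhgeo hu₀)
  have hz0 : dist (f c) z = dist y z - u₀ := by
    rw [← he₀, dist_comm]; exact (geo_dist_right hhgeo hu₀)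
  rw [hdyf] at hy0
  rw [hdfz] at hz0
  rw [hL]
  linarith


/-- The median construction. -/
lemma median (ht : IsRTree T) (x y z : T) {f : ℝ → T} (hf : IsGeodesicArc x y f) :
    ∃ c, c ∈ Icc 0 (dist x y) ∧ c ∈ Icc 0 (dist x z) ∧
      dist (f c) y = dist x y - c ∧ dist (f c) z = dist x z - c ∧
      dist y z = (dist x y - c) + (dist x z - c) := by
  obtain ⟨g, hg⟩ := (ht x z).1
  set μ := min (dist x y) (dist x z) with hμ
  set A := Icc 0 μ ∩ {s : ℝ | f s = g s} with hA
  have hμ0 : (0:ℝ) ≤ μ := le_min dist_nonneg dist_nonneg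
  have h0A : (0:ℝ) ∈ A := ⟨⟨le_refl _, hμ0⟩, by simp only [mem_setOf_eq, hf.2.1, hg.2.1]⟩
  have hAcl : IsClosed A := by
    have hf' : ContinuousOn f (Icc (0:ℝ) μ) :=
      (geo_continuousOn hf).mono (Icc_subset_Icc (le_refl _) (min_le_left _ _))
    have hg' : ContinuousOn g (Icc (0:ℝ) μ) :=
      (geo_continuousOn hg).mono (Icc_subset_Icc (le_refl _) (min_le_right _ _))
    have hcont : ContinuousOn (fun s => dist (f s) (g s)) (Icc (0:ℝ) μ) := by fun_prop
    have heq : A = Icc 0 μ ∩ (fun s => dist (f s) (g s)) ⁻¹' {0} := by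
      ext s; simp [hA, dist_eq_zero]
    rw [heq]
    exact hcont.preimage_isClosed_of_isClosed isClosed_Icc isClosed_singleton
  have hbdd : BddAbove A := BddAbove.mono inter_subset_left bddAbove_Icc
  set c := sSup A with hc
  have hcA : c ∈ A := hAcl.csSup_mem ⟨0, h0A⟩ hbdd
  have hcy : c ∈ Icc 0 (dist x y) := ⟨hcA.1.1, hcA.1.2.trans (min_le_left _ _)⟩
  have hcz : c ∈ Icc 0 (dist x z) := ⟨hcA.1.1, hcA.1.2.trans (min_le_right _ _)⟩
  have hfg : f c = g c := hcA.2
  have hmax : ∀ s ∈ Icc 0 μ, f s = g s → s ≤ c := fun s hs hfs => le_csSup hbdd ⟨hs, hfs⟩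
  refine ⟨c, hcy, hcz, ?_, ?_, concat_dist ht hf hg hcy hcz hfg hmax⟩
  · rw [dist_comm]; exact geo_dist_right hf hcy
  · rw [hfg, dist_comm]; exact geo_dist_right hg hcz

lemma fourPt_of_rtree (ht : IsRTree T) : FourPt T := by
  intro a b p q
  obtain ⟨f, hf⟩ := (ht a b).1
  obtain ⟨c₃, hc₃y, _, hfy3, hfz3, hyz3⟩ := median ht a b p hf
  obtain ⟨c₄, hc₄y, _, hfy4, hfz4, hyz4⟩ := median ht a b q hf
  have hmm : dist (f c₃) (f c₄) = |c₃ - c₄| := hf.1 _ _ hc₃y hc₄y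
  have t4 := dist_triangle4 p (f c₃) (f c₄) q
  have e1 : dist p (f c₃) = dist a p - c₃ := by rw [dist_comm]; exact hfz3
  have e2 : dist (f c₄) q = dist a q - c₄ := hfz4
  rcases le_total c₃ c₄ with h | h
  · refine le_max_of_le_right ?_
    have habs : |c₃ - c₄| = c₄ - c₃ := by
      rw [abs_of_nonpos (by linarith)]; ring
    linarith [hyz3, t4, hmm, e1, e2, habs]
  · refine le_max_of_le_left ?_
    have habs : |c₃ - c₄| = c₃ - c₄ := abs_of_nonneg (by linarith)
    linarith [hyz4, t4, hmm, e1, e2, habs]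

lemma connectedSpace_of_rtree [Nonempty T] (ht : IsRTree T) : ConnectedSpace T := by
  have : PathConnectedSpace T := by
    refine ⟨‹Nonempty T›, fun x y => ?_⟩
    obtain ⟨f, hf⟩ := (ht x y).1
    refine ⟨⟨⟨fun t : unitInterval => f (t * dist x y), ?_⟩, ?_, ?_⟩⟩
    · apply (geo_continuousOn hf).comp_continuous
        (continuous_subtype_val.mul continuous_const)
      intro t
      refine ⟨mul_nonneg t.2.1 dist_nonneg, ?_⟩
      show (t : ℝ) * dist x y ≤ dist x y
      nlinarith [t.2.2, dist_nonneg (x := x) (y := y), t.2.1]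
    · show f ((0 : unitInterval) * dist x y) = x
      norm_num [hf.2.1]
    · show f ((1 : unitInterval) * dist x y) = y
      norm_num [hf.2.2]
  exact PathConnectedSpace.connectedSpace

end RTreeAux

/-- a metric space is an ℝ-tree iff it is connected and satisfies
the four-point inequality. -/
theorem isRTree_iff_connected_fourPoint (T : Type*) [MetricSpace T] [Nonempty T] :
    IsRTree T ↔
      (ConnectedSpace T ∧
        ∀ σ₁ σ₂ σ₃ σ₄ : T,
          dist σ₁ σ₂ + dist σ₃ σ₄ ≤
            max (dist σ₁ σ₃ + dist σ₂ σ₄) (dist σ₁ σ₄ + dist σ₂ σ₃)) := by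
  constructor
  · intro ht
    exact ⟨RTreeAux.connectedSpace_of_rtree ht, RTreeAux.fourPt_of_rtree ht⟩
  · rintro ⟨hc, hH⟩
    haveI : ConnectedSpace T := hc
    have H : RTreeAux.FourPt T := hH
    intro x y
    refine ⟨RTreeAux.exists_geodesic H x y,
      fun f g hf hg => RTreeAux.geo_unique H hf hg, ?_⟩
    intro j hjc hji hj0 hj1 f hf
    exact Set.Subset.antisymm (RTreeAux.path_subset_seg H hf hjc hji hj0 hj1)
      (RTreeAux.seg_subset_path H hf hjc hji hj0 hj1)
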